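/- Let τ ≥ e and 1/2 ≤ σ ≤ 2. For s = σ + it with t > 0, (1/2)·e^{t/(2τ)} < |cos(s/(2τ))| < e^{t/(2τ)}. -/

import Mathlib

set_option maxHeartbeats 1000000

theorem abs_cos_bounds (τ σ t : ℝ) (hτ : Real.exp 1 ≤ τ) (hσ1 : 1 / 2 ≤ σ) (hσ2 : σ ≤ 2)
    (ht : 0 < t) :
    1 / 2 * Real.exp (t / (2 * τ)) < ‖Complex.cos ((σ + t * Complex.I) / (2 * τ))‖
      ∧ ‖Complex.cos ((σ + t * Complex.I) / (2 * τ))‖ < Real.exp (t / (2 * τ)) := by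
  have he : (2.7182818283 : ℝ) < Real.exp 1 := Real.exp_one_gt_d9
  have hτ0 : (0:ℝ) < τ := by linarith
  set x : ℝ := σ / (2 * τ) with hxdef
  set y : ℝ := t / (2 * τ) with hydef
  clear_value x y
  have hy0 : 0 < y := by rw [hydef]; positivity
  have hx0 : 0 < x := by rw [hxdef]; positivity
  have hxle : x ≤ 1 / 2.7 := by
    rw [hxdef, div_le_iff₀ (by positivity)]
    nlinarith
  have hz : ((σ : ℂ) + t * Complex.I) / (2 * τ) = (x : ℂ) + (y : ℂ) * Complex.I := by
    rw [hxdef, hydef]; push_cast; field_simp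
  have hcos : Complex.cos ((x : ℂ) + (y : ℂ) * Complex.I)
      = ((Real.cos x * Real.cosh y : ℝ) : ℂ) + ((-(Real.sin x * Real.sinh y) : ℝ) : ℂ) * Complex.I := by
    rw [Complex.cos_add, Complex.cos_mul_I, Complex.sin_mul_I]
    push_cast [← Complex.ofReal_cos, ← Complex.ofReal_sin, ← Complex.ofReal_cosh,
      ← Complex.ofReal_sinh]
    ring
  rw [hz, hcos, Complex.norm_add_mul_I]
  have hE1 : 1 < Real.exp y := by nlinarith [Real.add_one_le_exp y]
  have hE0 : 0 < Real.exp y := Real.exp_pos y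
  have hCS : Real.cosh y + Real.sinh y = Real.exp y := Real.cosh_add_sinh y
  have hCS' : Real.cosh y - Real.sinh y = Real.exp (-y) := Real.cosh_sub_sinh y
  have hr0 : 0 < Real.exp (-y) := Real.exp_pos _
  have hr1 : Real.exp (-y) < 1 := Real.exp_lt_one_iff.mpr (by linarith)
  have hEr : Real.exp y * Real.exp (-y) = 1 := by
    rw [← Real.exp_add]; simp
  have hpyth : Real.sin x ^ 2 + Real.cos x ^ 2 = 1 := Real.sin_sq_add_cos_sq x
  have hcosx : 1 - x ^ 2 / 2 < Real.cos x := Real.one_sub_sq_div_two_lt_cos (ne_of_gt hx0)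
  have hx2 : x * x ≤ (1 / 2.7) * (1 / 2.7) := mul_self_le_mul_self hx0.le hxle
  have hcgt : (0.93 : ℝ) < Real.cos x := by nlinarith
  have hcos2 : (1:ℝ) / 2 < Real.cos x ^ 2 := by nlinarith
  have hA : (Real.cos x * Real.cosh y) ^ 2 + (-(Real.sin x * Real.sinh y)) ^ 2
      = Real.cos x ^ 2 + Real.sinh y ^ 2 := by
    have h2 : Real.cosh y ^ 2 - Real.sinh y ^ 2 = 1 := Real.cosh_sq_sub_sinh_sq y
    nlinarith [h2, hpyth]
  rw [hA]
  have h2S : Real.sinh y = (Real.exp y - Real.exp (-y)) / 2 := by linarith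
  have hS2 : Real.sinh y ^ 2 = ((Real.exp y - Real.exp (-y)) / 2) ^ 2 := by rw [h2S]
  constructor
  · rw [Real.lt_sqrt (by positivity)]
    nlinarith [hS2, hEr, hcos2, sq_nonneg (Real.exp (-y))]
  · rw [Real.sqrt_lt' hE0]
    nlinarith [hS2, hEr, Real.cos_sq_le_one x, hr1, hr0, hE1]
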